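/- Fix ε > 0 and δ ∈ (0,1), assume N is nonempty, and let m = ⌈(|N|² / (2ε²)) · ln(2^{|P|+1} / δ)⌉. Then under m independent draws of realizations (the product distribution on m-tuples (H_1, …, H_m) of subsets of E, where each H_i has probability Pr(H_i)), the probability of the event that there exists some S ⊆ P with |F(S) − F̂_m(S)| > ε is at most δ, where F̂_m(S) = (1/m) Σ_{i=1}^m f_{H_i}(S). -/

import Mathlib

open Finset

/-- A single transmission step along a live edge of `H`, avoiding the removed vertex set `S`. -/
def MintStep {α : Type*} (H : Finset (α × α)) (S : Finset α) (x y : α) : Prop :=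
  (x, y) ∈ H ∧ x ∉ S ∧ y ∉ S

/-- `u` is reachable from `v` in `H[V \ S]`: there is a directed path (possibly of length 0)
from `v` to `u` using only edges of `H`, all of whose vertices avoid `S`. -/
def MintReach {α : Type*} (H : Finset (α × α)) (S : Finset α) (v u : α) : Prop :=
  v ∉ S ∧ Relation.ReflTransGen (MintStep H S) v u

/-- The realized MINT objective `f_H(S)`: the number of negative nodes (nodes outside `P`)
reachable from some untreated positive node (a node of `P \ S`) in `H[V \ S]`. -/
noncomputable def mintf {α : Type*} [DecidableEq α] (P : Finset α) (H : Finset (α × α))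
    (S : Finset α) : ℕ :=
  Set.ncard {u : α | u ∉ P ∧ ∃ v ∈ P \ S, MintReach H S v u}

/-- The probability of the live-edge realization `H ⊆ E`. -/
def mintPr {α : Type*} [DecidableEq α] (E : Finset (α × α)) (w : α × α → ℝ)
    (H : Finset (α × α)) : ℝ :=
  (∏ e ∈ H, w e) * ∏ e ∈ E \ H, (1 - w e)

/-- The expected MINT objective `F(S) = Σ_{H ⊆ E} Pr(H) · f_H(S)`. -/
noncomputable def mintF {α : Type*} [DecidableEq α] (E : Finset (α × α)) (w : α × α → ℝ)
    (P : Finset α) (S : Finset α) : ℝ :=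
  ∑ H ∈ E.powerset, mintPr E w H * (mintf P H S : ℝ)

/-! ### Auxiliary lemmas: a discrete Hoeffding/Chernoff bound -/

section Aux

/-- Convexity of `exp`: interpolation between `0` and `s`. -/
private lemma mint_exp_interp (s x : ℝ) (h0 : 0 ≤ x) (h1 : x ≤ 1) :
    Real.exp (s * x) ≤ 1 - x + x * Real.exp s := by
  have h := convexOn_exp.2 (Set.mem_univ (0 : ℝ)) (Set.mem_univ s)
    (by linarith : (0:ℝ) ≤ 1 - x) h0 (by ring)
  simp only [smul_eq_mul, mul_zero, zero_add, Real.exp_zero, mul_one] at h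
  calc Real.exp (s * x) = Real.exp (x * s) := by rw [mul_comm]
  _ ≤ 1 - x + x * Real.exp s := h

/-- Core analytic claim behind Hoeffding's lemma, `0 < q < 1` case. -/
private lemma mint_key_core (q : ℝ) (hq0 : 0 < q) (hq1 : q < 1) (s : ℝ) :
    Real.log (1 - q + q * Real.exp s) - s * q - s ^ 2 / 8 ≤ 0 := by
  set A : ℝ → ℝ := fun t => 1 - q + q * Real.exp t with hA
  have hApos : ∀ t, 0 < A t := fun t => by
    have := Real.exp_pos t
    simp only [hA]
    nlinarith
  set g : ℝ → ℝ := fun t => Real.log (A t) - t * q - t ^ 2 / 8 with hg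
  set h : ℝ → ℝ := fun t => q * Real.exp t / A t - q - t / 4 with hh
  have hAd : ∀ t, HasDerivAt A (q * Real.exp t) t := fun t => by
    exact ((Real.hasDerivAt_exp t).const_mul q).const_add (1 - q)
  have hgd : ∀ t, HasDerivAt g (h t) t := by
    intro t
    have h1 : HasDerivAt (fun t => Real.log (A t)) (q * Real.exp t / A t) t :=
      (hAd t).log (ne_of_gt (hApos t))
    have h2 : HasDerivAt (fun t : ℝ => t * q) q t := by
      simpa using (hasDerivAt_id t).mul_const q
    have h3 : HasDerivAt (fun t : ℝ => t ^ 2 / 8) (t / 4) t := by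
      have h := (hasDerivAt_pow 2 t).div_const 8
      rw [show t / 4 = ((2:ℕ):ℝ) * t ^ (2 - 1) / 8 by push_cast; ring]
      exact h
    exact (h1.sub h2).sub h3
  have hhd : ∀ t, HasDerivAt h
      ((q * Real.exp t * A t - q * Real.exp t * (q * Real.exp t)) / (A t) ^ 2 - 1 / 4) t := by
    intro t
    have h1 : HasDerivAt (fun t => q * Real.exp t / A t)
        ((q * Real.exp t * A t - q * Real.exp t * (q * Real.exp t)) / (A t) ^ 2) t :=
      ((Real.hasDerivAt_exp t).const_mul q).div (hAd t) (ne_of_gt (hApos t))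
    have h2 : HasDerivAt (fun t : ℝ => t / 4) (1 / 4) t := (hasDerivAt_id t).div_const 4
    exact (h1.sub_const q).sub h2
  have hhd' : ∀ t, (q * Real.exp t * A t - q * Real.exp t * (q * Real.exp t)) / (A t) ^ 2
      - 1 / 4 ≤ 0 := by
    intro t
    have hAt := hApos t
    have hkey : (q * Real.exp t * A t - q * Real.exp t * (q * Real.exp t)) / (A t) ^ 2
        ≤ 1 / 4 := by
      have e : (q * Real.exp t * A t - q * Real.exp t * (q * Real.exp t)) / (A t) ^ 2
          = 1 / 4 - (A t - 2 * (q * Real.exp t)) ^ 2 / (4 * (A t) ^ 2) := by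
        field_simp
        ring
      rw [e]
      have hnn : 0 ≤ (A t - 2 * (q * Real.exp t)) ^ 2 / (4 * (A t) ^ 2) := by positivity
      linarith
    linarith
  have hanti : Antitone h := by
    apply antitone_of_hasDerivAt_nonpos hhd
    intro t
    exact hhd' t
  have hh0 : h 0 = 0 := by
    simp only [hh, hA, Real.exp_zero, mul_one]
    have h1 : (1 : ℝ) - q + q = 1 := by ring
    rw [h1]
    norm_num
  have hg0 : g 0 = 0 := by
    simp only [hg, hA, Real.exp_zero, mul_one]
    have h1 : (1 : ℝ) - q + q = 1 := by ring
    rw [h1]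
    simp
  have hgle : ∀ t, g t ≤ 0 := by
    intro t
    rcases le_total t 0 with ht | ht
    · have hmg : MonotoneOn g (Set.Iic (0:ℝ)) := by
        apply monotoneOn_of_hasDerivWithinAt_nonneg (convex_Iic 0) (f' := h)
        · exact Continuous.continuousOn (by
            have : Differentiable ℝ g := fun t => (hgd t).differentiableAt
            exact this.continuous)
        · intro x _
          exact (hgd x).hasDerivWithinAt
        · intro x hx
          rw [interior_Iic] at hx
          have : h 0 ≤ h x := hanti (le_of_lt hx)
          linarith [hh0 ▸ this]
      have := hmg (Set.mem_Iic.mpr ht) (Set.mem_Iic.mpr le_rfl) ht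
      linarith [hg0 ▸ this]
    · have hmg : AntitoneOn g (Set.Ici (0:ℝ)) := by
        apply antitoneOn_of_hasDerivWithinAt_nonpos (convex_Ici 0) (f' := h)
        · exact Continuous.continuousOn (by
            have : Differentiable ℝ g := fun t => (hgd t).differentiableAt
            exact this.continuous)
        · intro x _
          exact (hgd x).hasDerivWithinAt
        · intro x hx
          rw [interior_Ici] at hx
          have : h x ≤ h 0 := hanti (le_of_lt hx)
          linarith [hh0 ▸ this]
      have := hmg (Set.mem_Ici.mpr le_rfl) (Set.mem_Ici.mpr ht) ht
      linarith [hg0 ▸ this]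
  exact hgle s

/-- Hoeffding's lemma, elementary form. -/
private lemma mint_key (q s : ℝ) (hq0 : 0 ≤ q) (hq1 : q ≤ 1) :
    Real.exp (-(s * q)) * (1 - q + q * Real.exp s) ≤ Real.exp (s ^ 2 / 8) := by
  rcases eq_or_lt_of_le hq0 with h0 | h0
  · rw [← h0]
    simp only [mul_zero, neg_zero, Real.exp_zero, sub_zero, zero_mul, add_zero, one_mul]
    exact Real.one_le_exp (by positivity)
  rcases eq_or_lt_of_le hq1 with h1 | h1
  · rw [h1]
    simp only [mul_one, sub_self, zero_add, one_mul]
    rw [← Real.exp_add]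
    apply Real.exp_le_exp.mpr
    nlinarith [sq_nonneg s]
  · have hA : 0 < 1 - q + q * Real.exp s := by nlinarith [Real.exp_pos s]
    have hcore := mint_key_core q h0 h1 s
    calc Real.exp (-(s * q)) * (1 - q + q * Real.exp s)
        = Real.exp (-(s * q) + Real.log (1 - q + q * Real.exp s)) := by
          rw [Real.exp_add, Real.exp_log hA]
    _ ≤ Real.exp (s ^ 2 / 8) := Real.exp_le_exp.mpr (by linarith)

/-- The MGF bound: for a random variable with values in `[0, B]`,
`E[exp (t (X - μ))] ≤ exp (t² B² / 8)`. -/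
private lemma mint_mgf {Ω : Type*} (Ωs : Finset Ω) (p X : Ω → ℝ)
    (hp : ∀ ω ∈ Ωs, 0 ≤ p ω) (hp1 : ∑ ω ∈ Ωs, p ω = 1)
    (B : ℝ) (hB : 0 < B) (hX0 : ∀ ω ∈ Ωs, 0 ≤ X ω) (hXB : ∀ ω ∈ Ωs, X ω ≤ B) (t : ℝ) :
    ∑ ω ∈ Ωs, p ω * Real.exp (t * (X ω - ∑ ω ∈ Ωs, p ω * X ω))
      ≤ Real.exp (t ^ 2 * B ^ 2 / 8) := by
  set μ := ∑ ω ∈ Ωs, p ω * X ω with hμ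
  have hμ0 : 0 ≤ μ := Finset.sum_nonneg fun ω hω => mul_nonneg (hp ω hω) (hX0 ω hω)
  have hμB : μ ≤ B := by
    calc μ ≤ ∑ ω ∈ Ωs, p ω * B :=
          Finset.sum_le_sum fun ω hω => mul_le_mul_of_nonneg_left (hXB ω hω) (hp ω hω)
    _ = B := by rw [← Finset.sum_mul, hp1, one_mul]
  set s := t * B with hs
  have hBne : B ≠ 0 := ne_of_gt hB
  have step1 : ∑ ω ∈ Ωs, p ω * Real.exp (t * (X ω - μ))
      = Real.exp (-(t * μ)) * ∑ ω ∈ Ωs, p ω * Real.exp (t * X ω) := by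
    rw [Finset.mul_sum]
    apply Finset.sum_congr rfl
    intro ω _
    have harg : t * (X ω - μ) = t * X ω + -(t * μ) := by ring
    rw [harg, Real.exp_add]
    ring
  have step2 : ∑ ω ∈ Ωs, p ω * Real.exp (t * X ω)
      ≤ ∑ ω ∈ Ωs, p ω * (1 - X ω / B + (X ω / B) * Real.exp s) := by
    apply Finset.sum_le_sum
    intro ω hω
    apply mul_le_mul_of_nonneg_left _ (hp ω hω)
    have hx : t * X ω = s * (X ω / B) := by
      rw [hs]; field_simp
    rw [hx]
    exact mint_exp_interp s (X ω / B) (div_nonneg (hX0 ω hω) hB.le)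
      ((div_le_one hB).mpr (hXB ω hω))
  have step3 : ∑ ω ∈ Ωs, p ω * (1 - X ω / B + (X ω / B) * Real.exp s)
      = 1 - μ / B + (μ / B) * Real.exp s := by
    have hterm : ∀ ω ∈ Ωs, p ω * (1 - X ω / B + (X ω / B) * Real.exp s)
        = p ω + (p ω * X ω) * ((Real.exp s - 1) / B) := by
      intro ω _
      field_simp
      ring
    rw [Finset.sum_congr rfl hterm, Finset.sum_add_distrib, hp1, ← Finset.sum_mul, ← hμ]
    field_simp
    ring
  have hfinal : Real.exp (-(t * μ)) * (1 - μ / B + (μ / B) * Real.exp s)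
      ≤ Real.exp (t ^ 2 * B ^ 2 / 8) := by
    have htμ : t * μ = s * (μ / B) := by rw [hs]; field_simp
    have hss : s ^ 2 / 8 = t ^ 2 * B ^ 2 / 8 := by rw [hs]; ring
    rw [htμ, ← hss]
    exact mint_key (μ / B) s (div_nonneg hμ0 hB.le) ((div_le_one hB).mpr hμB)
  have hexpnn : (0:ℝ) ≤ Real.exp (-(t * μ)) := (Real.exp_pos _).le
  calc ∑ ω ∈ Ωs, p ω * Real.exp (t * (X ω - μ))
      = Real.exp (-(t * μ)) * ∑ ω ∈ Ωs, p ω * Real.exp (t * X ω) := step1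
  _ ≤ Real.exp (-(t * μ)) * (1 - μ / B + (μ / B) * Real.exp s) := by
      apply mul_le_mul_of_nonneg_left _ hexpnn
      calc ∑ ω ∈ Ωs, p ω * Real.exp (t * X ω)
          ≤ ∑ ω ∈ Ωs, p ω * (1 - X ω / B + (X ω / B) * Real.exp s) := step2
      _ = 1 - μ / B + (μ / B) * Real.exp s := step3
  _ ≤ Real.exp (t ^ 2 * B ^ 2 / 8) := hfinal

/-- One-sided Chernoff bound for the empirical mean of `m` i.i.d. draws. -/
private lemma mint_chernoff {Ω : Type*} [DecidableEq Ω] (Ωs : Finset Ω) (p X : Ω → ℝ)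
    (hp : ∀ ω ∈ Ωs, 0 ≤ p ω) (hp1 : ∑ ω ∈ Ωs, p ω = 1)
    (B : ℝ) (hB : 0 < B) (hX0 : ∀ ω ∈ Ωs, 0 ≤ X ω) (hXB : ∀ ω ∈ Ωs, X ω ≤ B)
    (m : ℕ) (ε : ℝ) (hε : 0 < ε)
    (pred : (Fin m → Ω) → Prop) [DecidablePred pred]
    (hpred : ∀ ωs, pred ωs →
      (m : ℝ) * ((∑ ω ∈ Ωs, p ω * X ω) + ε) ≤ ∑ i, X (ωs i)) :
    ∑ ωs ∈ (Fintype.piFinset fun _ : Fin m => Ωs).filter pred, ∏ i, p (ωs i)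
      ≤ Real.exp (-(2 * m * ε ^ 2 / B ^ 2)) := by
  classical
  set μ := ∑ ω ∈ Ωs, p ω * X ω with hμ
  set t := 4 * ε / B ^ 2 with ht
  have htpos : 0 < t := by positivity
  set g : Ω → ℝ := fun ω => p ω * Real.exp (t * (X ω - μ)) with hgdef
  have hgnn : ∀ ω ∈ Ωs, 0 ≤ g ω := fun ω hω => mul_nonneg (hp ω hω) (Real.exp_pos _).le
  have hgsum : ∑ ω ∈ Ωs, g ω ≤ Real.exp (t ^ 2 * B ^ 2 / 8) :=
    mint_mgf Ωs p X hp hp1 B hB hX0 hXB t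
  have hprod_eq : ∀ ωs : Fin m → Ω, ∏ i, g (ωs i)
      = (∏ i, p (ωs i)) * Real.exp (t * ((∑ i, X (ωs i)) - m * μ)) := by
    intro ωs
    rw [Finset.prod_mul_distrib, ← Real.exp_sum]
    congr 1
    rw [← Finset.mul_sum]
    congr 1
    rw [Finset.sum_sub_distrib, Finset.sum_const, Finset.card_univ, Fintype.card_fin,
      nsmul_eq_mul]
  have hstep : ∀ ωs ∈ (Fintype.piFinset fun _ : Fin m => Ωs).filter pred,
      ∏ i, p (ωs i) ≤ Real.exp (-(t * (m * ε))) * ∏ i, g (ωs i) := by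
    intro ωs hωs
    rw [Finset.mem_filter] at hωs
    have hmem : ∀ i, ωs i ∈ Ωs := Fintype.mem_piFinset.mp hωs.1
    have hpnn : 0 ≤ ∏ i, p (ωs i) := Finset.prod_nonneg fun i _ => hp _ (hmem i)
    have h2 : (1:ℝ) ≤ Real.exp (-(t * (m * ε))) * Real.exp (t * ((∑ i, X (ωs i)) - m * μ)) := by
      rw [← Real.exp_add]
      apply Real.one_le_exp
      have hsum := hpred ωs hωs.2
      nlinarith [htpos, hsum]
    calc ∏ i, p (ωs i) = (∏ i, p (ωs i)) * 1 := (mul_one _).symm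
    _ ≤ (∏ i, p (ωs i)) * (Real.exp (-(t * (m * ε)))
          * Real.exp (t * ((∑ i, X (ωs i)) - m * μ))) :=
        mul_le_mul_of_nonneg_left h2 hpnn
    _ = Real.exp (-(t * (m * ε))) * ∏ i, g (ωs i) := by rw [hprod_eq]; ring
  have hsub : (Fintype.piFinset fun _ : Fin m => Ωs).filter pred
      ⊆ Fintype.piFinset fun _ : Fin m => Ωs := Finset.filter_subset _ _
  calc ∑ ωs ∈ (Fintype.piFinset fun _ : Fin m => Ωs).filter pred, ∏ i, p (ωs i)
      ≤ ∑ ωs ∈ (Fintype.piFinset fun _ : Fin m => Ωs).filter pred,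
          Real.exp (-(t * (m * ε))) * ∏ i, g (ωs i) := Finset.sum_le_sum hstep
  _ ≤ ∑ ωs ∈ Fintype.piFinset fun _ : Fin m => Ωs,
        Real.exp (-(t * (m * ε))) * ∏ i, g (ωs i) := by
      apply Finset.sum_le_sum_of_subset_of_nonneg hsub
      intro ωs hωs _
      have hmem : ∀ i, ωs i ∈ Ωs := Fintype.mem_piFinset.mp hωs
      exact mul_nonneg (Real.exp_pos _).le (Finset.prod_nonneg fun i _ => hgnn _ (hmem i))
  _ = Real.exp (-(t * (m * ε))) * ∑ ωs ∈ Fintype.piFinset fun _ : Fin m => Ωs,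
        ∏ i, g (ωs i) := by rw [Finset.mul_sum]
  _ = Real.exp (-(t * (m * ε))) * ∏ _i : Fin m, ∑ ω ∈ Ωs, g ω := by
      rw [Finset.prod_univ_sum]
  _ = Real.exp (-(t * (m * ε))) * (∑ ω ∈ Ωs, g ω) ^ m := by
      rw [Finset.prod_const, Finset.card_univ, Fintype.card_fin]
  _ ≤ Real.exp (-(t * (m * ε))) * (Real.exp (t ^ 2 * B ^ 2 / 8)) ^ m := by
      apply mul_le_mul_of_nonneg_left _ (Real.exp_pos _).le
      exact pow_le_pow_left₀ (Finset.sum_nonneg hgnn) hgsum m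
  _ = Real.exp (-(2 * m * ε ^ 2 / B ^ 2)) := by
      rw [← Real.exp_nat_mul, ← Real.exp_add]
      congr 1
      rw [ht]
      field_simp
      ring

open Classical in
private lemma mint_sum_filter_or_le {β : Type*} (s : Finset β) (Q R : β → Prop)
    (f : β → ℝ) (hf : ∀ x ∈ s, 0 ≤ f x) :
    ∑ x ∈ s.filter (fun x => Q x ∨ R x), f x
      ≤ ∑ x ∈ s.filter (fun x => Q x), f x + ∑ x ∈ s.filter (fun x => R x), f x := by
  classical
  rw [Finset.sum_filter, Finset.sum_filter, Finset.sum_filter, ← Finset.sum_add_distrib]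
  apply Finset.sum_le_sum
  intro x hx
  by_cases hQ : Q x <;> by_cases hR : R x <;> simp [hQ, hR] <;> linarith [hf x hx]

open Classical in
private lemma mint_sum_filter_exists_le {β γ : Type*} (s : Finset β) (T : Finset γ)
    (Q : γ → β → Prop) (f : β → ℝ) (hf : ∀ x ∈ s, 0 ≤ f x) :
    ∑ x ∈ s.filter (fun x => ∃ S ∈ T, Q S x), f x
      ≤ ∑ S ∈ T, ∑ x ∈ s.filter (fun x => Q S x), f x := by
  classical
  have h1 : ∀ x ∈ s, (if (∃ S ∈ T, Q S x) then f x else 0)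
      ≤ ∑ S ∈ T, if Q S x then f x else 0 := by
    intro x hx
    have hnn : ∀ S ∈ T, (0:ℝ) ≤ if Q S x then f x else 0 := by
      intro S _
      by_cases h : Q S x <;> simp [h]
      exact hf x hx
    by_cases hex : ∃ S ∈ T, Q S x
    · obtain ⟨S₀, hS₀, hQ⟩ := hex
      rw [if_pos ⟨S₀, hS₀, hQ⟩]
      have he : f x = if Q S₀ x then f x else 0 := by rw [if_pos hQ]
      calc f x = if Q S₀ x then f x else 0 := he
      _ ≤ ∑ S ∈ T, if Q S x then f x else 0 := Finset.single_le_sum hnn hS₀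
    · rw [if_neg hex]
      exact Finset.sum_nonneg hnn
  calc ∑ x ∈ s.filter (fun x => ∃ S ∈ T, Q S x), f x
      = ∑ x ∈ s, if (∃ S ∈ T, Q S x) then f x else 0 := Finset.sum_filter _ _
  _ ≤ ∑ x ∈ s, ∑ S ∈ T, if Q S x then f x else 0 := Finset.sum_le_sum h1
  _ = ∑ S ∈ T, ∑ x ∈ s, if Q S x then f x else 0 := Finset.sum_comm
  _ = ∑ S ∈ T, ∑ x ∈ s.filter (fun x => Q S x), f x :=
      Finset.sum_congr rfl fun S _ => (Finset.sum_filter _ _).symm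

end Aux

set_option maxHeartbeats 2000000 in
open Classical in
/-- Uniform version (union bound over all `S ⊆ P`): with
`m = ⌈(|N|² / (2ε²)) · ln(2^{|P|+1} / δ)⌉` samples, under `m` independent draws of
realizations, the probability that there exists some `S ⊆ P` with `|F(S) - F̂_m(S)| > ε`
is at most `δ`. -/
theorem stmt10 {α : Type*} [Fintype α] [DecidableEq α] (E : Finset (α × α))
    (w : α × α → ℝ) (hw : ∀ e ∈ E, 0 ≤ w e ∧ w e ≤ 1)
    (P : Finset α) (hinc : ∀ e ∈ E, e.2 ∉ P) (hN : (Pᶜ : Finset α).Nonempty)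
    (ε δ : ℝ) (hε : 0 < ε) (hδ0 : 0 < δ) (hδ1 : δ < 1)
    (m : ℕ)
    (hm : m = ⌈((Pᶜ.card : ℝ) ^ 2 / (2 * ε ^ 2)) * Real.log ((2 : ℝ) ^ (P.card + 1) / δ)⌉₊) :
    ∑ Hs ∈ (Fintype.piFinset fun _ : Fin m => E.powerset).filter
        (fun Hs : Fin m → Finset (α × α) => ∃ S ⊆ P,
          ε < |mintF E w P S - (1 / (m : ℝ)) * ∑ i : Fin m, (mintf P (Hs i) S : ℝ)|),
      ∏ i : Fin m, mintPr E w (Hs i) ≤ δ := by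
  classical
  set B : ℝ := ((Pᶜ.card : ℕ) : ℝ) with hBdef
  have hcard : 0 < Pᶜ.card := Finset.card_pos.mpr hN
  have hB1 : (1:ℝ) ≤ B := by rw [hBdef]; exact_mod_cast hcard
  have hBpos : (0:ℝ) < B := lt_of_lt_of_le one_pos hB1
  have hp : ∀ H ∈ E.powerset, 0 ≤ mintPr E w H := by
    intro H hH
    rw [Finset.mem_powerset] at hH
    apply mul_nonneg
    · exact Finset.prod_nonneg fun e he => (hw e (hH he)).1
    · exact Finset.prod_nonneg fun e he => by
        linarith [(hw e (Finset.mem_sdiff.mp he).1).2]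
  have hp1 : ∑ H ∈ E.powerset, mintPr E w H = 1 := by
    have h := Finset.prod_add w (fun e => 1 - w e) E
    have h1 : ∏ e ∈ E, (w e + (1 - w e)) = 1 := by
      rw [Finset.prod_congr rfl (fun e _ => by ring : ∀ e ∈ E, w e + (1 - w e) = 1)]
      exact Finset.prod_const_one
    rw [h1] at h
    exact h.symm
  have hXB : ∀ S : Finset α, ∀ H : Finset (α × α), ((mintf P H S : ℕ) : ℝ) ≤ B := by
    intro S H
    rw [hBdef]
    have hsub : {u : α | u ∉ P ∧ ∃ v ∈ P \ S, MintReach H S v u} ⊆ ((Pᶜ : Finset α) : Set α) := by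
      intro u hu
      simp only [Finset.coe_compl, Set.mem_compl_iff, Finset.mem_coe]
      exact hu.1
    have hle := Set.ncard_le_ncard hsub (Set.toFinite _)
    rw [Set.ncard_coe_finset] at hle
    have h2 : mintf P H S ≤ Pᶜ.card := hle
    exact_mod_cast h2
  have hKgt1 : (1:ℝ) < (2:ℝ) ^ (P.card + 1) / δ := by
    rw [lt_div_iff₀ hδ0]
    have h2 : (1:ℝ) ≤ (2:ℝ) ^ (P.card + 1) := one_le_pow₀ (by norm_num)
    linarith
  have hlogpos : 0 < Real.log ((2:ℝ) ^ (P.card + 1) / δ) := Real.log_pos hKgt1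
  have hmpos : 0 < m := by
    rw [hm]
    apply Nat.ceil_pos.mpr
    apply mul_pos _ hlogpos
    positivity
  have hmR : (0:ℝ) < (m : ℝ) := by exact_mod_cast hmpos
  set c : ℝ := Real.exp (-(2 * m * ε ^ 2 / B ^ 2)) with hc
  have hcpos : 0 < c := Real.exp_pos _
  -- per-S bound via Chernoff both sides
  have hSbound : ∀ S ∈ P.powerset,
      ∑ Hs ∈ (Fintype.piFinset fun _ : Fin m => E.powerset).filter
        (fun Hs : Fin m → Finset (α × α) =>
          ε < |mintF E w P S - (1 / (m : ℝ)) * ∑ i : Fin m, (mintf P (Hs i) S : ℝ)|),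
        ∏ i : Fin m, mintPr E w (Hs i) ≤ 2 * c := by
    intro S _
    set X : Finset (α × α) → ℝ := fun H => ((mintf P H S : ℕ) : ℝ) with hXdef
    have hX0 : ∀ H ∈ E.powerset, 0 ≤ X H := fun H _ => Nat.cast_nonneg _
    have hXB' : ∀ H ∈ E.powerset, X H ≤ B := fun H _ => hXB S H
    have hY0 : ∀ H ∈ E.powerset, 0 ≤ B - X H := fun H hH => by linarith [hXB' H hH]
    have hYB : ∀ H ∈ E.powerset, B - X H ≤ B := fun H hH => by linarith [hX0 H hH]
    have hμ : mintF E w P S = ∑ H ∈ E.powerset, mintPr E w H * X H := rfl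
    have hsum' : ∑ H ∈ E.powerset, mintPr E w H * (B - X H)
        = B - ∑ H ∈ E.powerset, mintPr E w H * X H := by
      have hterm : ∀ H ∈ E.powerset,
          mintPr E w H * (B - X H) = mintPr E w H * B - mintPr E w H * X H :=
        fun H _ => by ring
      rw [Finset.sum_congr rfl hterm, Finset.sum_sub_distrib, ← Finset.sum_mul, hp1, one_mul]
    set up : (Fin m → Finset (α × α)) → Prop := fun Hs =>
      (m : ℝ) * ((∑ H ∈ E.powerset, mintPr E w H * X H) + ε) ≤ ∑ i, X (Hs i) with hup
    set dn : (Fin m → Finset (α × α)) → Prop := fun Hs =>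
      (m : ℝ) * ((∑ H ∈ E.powerset, mintPr E w H * (B - X H)) + ε)
        ≤ ∑ i, (B - X (Hs i)) with hdn
    have himp : ∀ Hs : Fin m → Finset (α × α),
        (ε < |mintF E w P S - (1 / (m : ℝ)) * ∑ i, X (Hs i)|) → up Hs ∨ dn Hs := by
      intro Hs habs
      set a : ℝ := (1 / (m : ℝ)) * ∑ i, X (Hs i) with hadef
      have hsumX : ∑ i, X (Hs i) = (m : ℝ) * a := by
        rw [hadef]
        field_simp
      rcases lt_abs.mp habs with hcase | hcase
      · right
        show (m : ℝ) * ((∑ H ∈ E.powerset, mintPr E w H * (B - X H)) + ε)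
          ≤ ∑ i, (B - X (Hs i))
        have hsummed : ∑ i : Fin m, (B - X (Hs i)) = (m : ℝ) * B - ∑ i, X (Hs i) := by
          rw [Finset.sum_sub_distrib, Finset.sum_const, Finset.card_univ, Fintype.card_fin,
            nsmul_eq_mul]
        rw [hsummed, hsum', hsumX]
        have hae : a + ε ≤ ∑ H ∈ E.powerset, mintPr E w H * X H := by
          rw [← hμ]; linarith
        nlinarith [hmR, hae]
      · left
        show (m : ℝ) * ((∑ H ∈ E.powerset, mintPr E w H * X H) + ε) ≤ ∑ i, X (Hs i)
        rw [hsumX]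
        have hae : (∑ H ∈ E.powerset, mintPr E w H * X H) + ε ≤ a := by
          rw [← hμ]; linarith
        nlinarith [hmR, hae]
    have hprodnn : ∀ Hs ∈ (Fintype.piFinset fun _ : Fin m => E.powerset),
        (0:ℝ) ≤ ∏ i, mintPr E w (Hs i) := by
      intro Hs hHs
      have hmem := Fintype.mem_piFinset.mp hHs
      exact Finset.prod_nonneg fun i _ => hp _ (hmem i)
    calc ∑ Hs ∈ (Fintype.piFinset fun _ : Fin m => E.powerset).filter
          (fun Hs : Fin m → Finset (α × α) =>
            ε < |mintF E w P S - (1 / (m : ℝ)) * ∑ i : Fin m, X (Hs i)|),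
          ∏ i : Fin m, mintPr E w (Hs i)
        ≤ ∑ Hs ∈ (Fintype.piFinset fun _ : Fin m => E.powerset).filter
            (fun Hs => up Hs ∨ dn Hs), ∏ i : Fin m, mintPr E w (Hs i) := by
          apply Finset.sum_le_sum_of_subset_of_nonneg
          · apply Finset.monotone_filter_right
            intro Hs _ hHs
            exact himp Hs hHs
          · intro Hs hHs _
            exact hprodnn Hs (Finset.mem_of_mem_filter Hs hHs)
    _ ≤ (∑ Hs ∈ (Fintype.piFinset fun _ : Fin m => E.powerset).filter
            (fun Hs => up Hs), ∏ i : Fin m, mintPr E w (Hs i))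
        + ∑ Hs ∈ (Fintype.piFinset fun _ : Fin m => E.powerset).filter
            (fun Hs => dn Hs), ∏ i : Fin m, mintPr E w (Hs i) :=
        mint_sum_filter_or_le _ up dn _ hprodnn
    _ ≤ c + c := by
        apply add_le_add
        · exact mint_chernoff E.powerset (mintPr E w) X hp hp1 B hBpos hX0 hXB' m ε hε
            up (fun ωs h => h)
        · exact mint_chernoff E.powerset (mintPr E w) (fun H => B - X H) hp hp1 B hBpos
            hY0 hYB m ε hε dn (fun ωs h => h)
    _ = 2 * c := by ring
  -- union bound over S ⊆ P
  have hprodnn : ∀ Hs ∈ (Fintype.piFinset fun _ : Fin m => E.powerset),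
      (0:ℝ) ≤ ∏ i, mintPr E w (Hs i) := by
    intro Hs hHs
    have hmem := Fintype.mem_piFinset.mp hHs
    exact Finset.prod_nonneg fun i _ => hp _ (hmem i)
  have hrw : (Fintype.piFinset fun _ : Fin m => E.powerset).filter
        (fun Hs : Fin m → Finset (α × α) => ∃ S ⊆ P,
          ε < |mintF E w P S - (1 / (m : ℝ)) * ∑ i : Fin m, (mintf P (Hs i) S : ℝ)|)
      = (Fintype.piFinset fun _ : Fin m => E.powerset).filter
        (fun Hs : Fin m → Finset (α × α) => ∃ S ∈ P.powerset,
          ε < |mintF E w P S - (1 / (m : ℝ)) * ∑ i : Fin m, (mintf P (Hs i) S : ℝ)|) := by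
    apply Finset.filter_congr
    intro Hs _
    simp only [Finset.mem_powerset]
  rw [hrw]
  have hunion := mint_sum_filter_exists_le (Fintype.piFinset fun _ : Fin m => E.powerset)
    P.powerset
    (fun S (Hs : Fin m → Finset (α × α)) =>
      ε < |mintF E w P S - (1 / (m : ℝ)) * ∑ i : Fin m, (mintf P (Hs i) S : ℝ)|)
    (fun Hs => ∏ i : Fin m, mintPr E w (Hs i)) hprodnn
  have hsumS : ∑ S ∈ P.powerset, ∑ Hs ∈ (Fintype.piFinset fun _ : Fin m => E.powerset).filter
        (fun Hs : Fin m → Finset (α × α) =>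
          ε < |mintF E w P S - (1 / (m : ℝ)) * ∑ i : Fin m, (mintf P (Hs i) S : ℝ)|),
        ∏ i : Fin m, mintPr E w (Hs i) ≤ ∑ S ∈ P.powerset, 2 * c :=
    Finset.sum_le_sum hSbound
  have hconst : ∑ S ∈ P.powerset, (2 * c : ℝ) = (2:ℝ) ^ (P.card + 1) * c := by
    rw [Finset.sum_const, Finset.card_powerset, nsmul_eq_mul]
    push_cast
    ring
  -- numeric bound
  have hxle : (B ^ 2 / (2 * ε ^ 2)) * Real.log ((2:ℝ) ^ (P.card + 1) / δ) ≤ (m : ℝ) := by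
    rw [hm]
    exact Nat.le_ceil _
  have hcle : c ≤ δ / 2 ^ (P.card + 1) := by
    rw [hc]
    rw [show δ / (2:ℝ) ^ (P.card + 1) = Real.exp (Real.log (δ / 2 ^ (P.card + 1))) from
      (Real.exp_log (by positivity)).symm]
    apply Real.exp_le_exp.mpr
    have hloginv : Real.log (δ / (2:ℝ) ^ (P.card + 1))
        = - Real.log ((2:ℝ) ^ (P.card + 1) / δ) := by
      rw [← Real.log_inv]
      congr 1
      rw [inv_div]
    rw [hloginv, neg_le_neg_iff]
    rw [le_div_iff₀ (pow_pos hBpos 2)]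
    have h2 := mul_le_mul_of_nonneg_right hxle
      (le_of_lt (show (0:ℝ) < 2 * ε ^ 2 by positivity))
    have h3 : (B ^ 2 / (2 * ε ^ 2)) * Real.log ((2:ℝ) ^ (P.card + 1) / δ) * (2 * ε ^ 2)
        = Real.log ((2:ℝ) ^ (P.card + 1) / δ) * B ^ 2 := by
      field_simp
    rw [h3] at h2
    linarith
  have hfin : (2:ℝ) ^ (P.card + 1) * c ≤ δ := by
    calc (2:ℝ) ^ (P.card + 1) * c ≤ (2:ℝ) ^ (P.card + 1) * (δ / 2 ^ (P.card + 1)) :=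
        mul_le_mul_of_nonneg_left hcle (by positivity)
    _ = δ := by field_simp
  calc ∑ Hs ∈ (Fintype.piFinset fun _ : Fin m => E.powerset).filter
        (fun Hs : Fin m → Finset (α × α) => ∃ S ∈ P.powerset,
          ε < |mintF E w P S - (1 / (m : ℝ)) * ∑ i : Fin m, (mintf P (Hs i) S : ℝ)|),
      ∏ i : Fin m, mintPr E w (Hs i)
      ≤ ∑ S ∈ P.powerset, ∑ Hs ∈ (Fintype.piFinset fun _ : Fin m => E.powerset).filter
          (fun Hs : Fin m → Finset (α × α) =>
            ε < |mintF E w P S - (1 / (m : ℝ)) * ∑ i : Fin m, (mintf P (Hs i) S : ℝ)|),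
          ∏ i : Fin m, mintPr E w (Hs i) := hunion
  _ ≤ ∑ S ∈ P.powerset, 2 * c := hsumS
  _ = (2:ℝ) ^ (P.card + 1) * c := hconst
  _ ≤ δ := hfin
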